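/- Let Y1 and Y2 be independent, identically distributed absolutely continuous real random variables with common log-concave probability density function g and cumulative distribution function G, and let V = |Y1 - Y2|. Let w : [0,∞) → [0,∞) be a decreasing nonnegative weight function. For c < d with G(d) > G(c), let h(v;c,d) = (∫_{c+v}^{d} g(y-v) g(y) dy)/(G(d)-G(c))^2 for v ∈ [0, d-c], and define J^w(V|S) = -(1/2) ∫_0^{d-c} w(v) h(v;c,d)^2 dv. Then for fixed d and any c1 ≤ c2 < d, J^w(V | c2 < Y1, Y2 < d) ≤ J^w(V | c1 < Y1, Y2 < d); that is, J^w(V|S) is decreasing in c. -/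

import Mathlib

open MeasureTheory Real Set

namespace WExtropy

lemma g_spread {g : ℝ → ℝ} (hg0 : ∀ y, 0 ≤ g y)
    (hlc : ConcaveOn ℝ {y : ℝ | 0 < g y} (fun y => Real.log (g y)))
    {a b a' b' : ℝ} (h1 : a ≤ a') (h2 : b' ≤ b) (h3 : a ≤ b') (h4 : a' ≤ b)
    (hs : a + b = a' + b') : g a * g b ≤ g a' * g b' := by
  rcases eq_or_lt_of_le (h3.trans h2) with hab | hab
  · have ha' : a' = a := le_antisymm (hab ▸ h4) h1
    have hb' : b' = b := by linarith
    rw [ha', hb']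
  · by_cases hga : 0 < g a
    swap
    · have h0 : g a = 0 := le_antisymm (not_lt.mp hga) (hg0 a)
      rw [h0, zero_mul]; exact mul_nonneg (hg0 _) (hg0 _)
    by_cases hgb : 0 < g b
    swap
    · have h0 : g b = 0 := le_antisymm (not_lt.mp hgb) (hg0 b)
      rw [h0, mul_zero]; exact mul_nonneg (hg0 _) (hg0 _)
    have hba : (0:ℝ) < b - a := by linarith
    set t : ℝ := (b - a') / (b - a) with ht_def
    have ht0 : 0 ≤ t := div_nonneg (by linarith) hba.le
    have ht1 : 0 ≤ 1 - t := by
      have : t ≤ 1 := (div_le_one hba).mpr (by linarith)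
      linarith
    have hsum : t + (1 - t) = 1 := by ring
    have ha'eq : t * a + (1 - t) * b = a' := by
      rw [ht_def]; field_simp; ring
    have hb'eq : (1 - t) * a + t * b = b' := by
      have h5 : t * a + (1 - t) * b + ((1 - t) * a + t * b) = a + b := by ring
      linarith [ha'eq]
    have haS : a ∈ {y : ℝ | 0 < g y} := hga
    have hbS : b ∈ {y : ℝ | 0 < g y} := hgb
    have ha'S : a' ∈ {y : ℝ | 0 < g y} := by
      have := hlc.1 haS hbS ht0 ht1 hsum
      rwa [smul_eq_mul, smul_eq_mul, ha'eq] at this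
    have hb'S : b' ∈ {y : ℝ | 0 < g y} := by
      have := hlc.1 haS hbS ht1 ht0 (by ring)
      rwa [smul_eq_mul, smul_eq_mul, hb'eq] at this
    have hA := hlc.2 haS hbS ht0 ht1 hsum
    rw [smul_eq_mul, smul_eq_mul, smul_eq_mul, smul_eq_mul, ha'eq] at hA
    have hB := hlc.2 haS hbS ht1 ht0 (by ring)
    rw [smul_eq_mul, smul_eq_mul, smul_eq_mul, smul_eq_mul, hb'eq] at hB
    have hga' : 0 < g a' := ha'S
    have hgb' : 0 < g b' := hb'S
    calc g a * g b = exp (log (g a) + log (g b)) := by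
          rw [exp_add, exp_log hga, exp_log hgb]
      _ ≤ exp (log (g a') + log (g b')) := by
          apply exp_le_exp.mpr; nlinarith [hA, hB]
      _ = g a' * g b' := by rw [exp_add, exp_log hga', exp_log hgb']

variable {g : ℝ → ℝ} {c d M : ℝ}

noncomputable def uu (g : ℝ → ℝ) (c d : ℝ) : ℝ → ℝ := (Set.Ioo c d).indicator g

lemma uu_nonneg (hg0 : ∀ y, 0 ≤ g y) (y : ℝ) : 0 ≤ uu g c d y :=
  Set.indicator_nonneg (fun x _ => hg0 x) y

lemma uu_le {c₁ : ℝ} (hg0 : ∀ y, 0 ≤ g y) (hM : ∀ y ∈ Set.Icc c₁ d, g y ≤ M)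
    (hc : c₁ ≤ c) (hM0 : 0 ≤ M) (y : ℝ) : uu g c d y ≤ M := by
  unfold uu
  by_cases hy : y ∈ Set.Ioo c d
  · rw [Set.indicator_of_mem hy]
    exact hM y ⟨hc.trans hy.1.le, hy.2.le⟩
  · rw [Set.indicator_of_notMem hy]; exact hM0

lemma uu_spread (hg0 : ∀ y, 0 ≤ g y)
    (hlc : ConcaveOn ℝ {y : ℝ | 0 < g y} (fun y => Real.log (g y)))
    {a b a' b' : ℝ} (h1 : a ≤ a') (h2 : b' ≤ b) (h3 : a ≤ b') (h4 : a' ≤ b)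
    (hs : a + b = a' + b') :
    uu g c d a * uu g c d b ≤ uu g c d a' * uu g c d b' := by
  by_cases ha : a ∈ Set.Ioo c d
  · by_cases hb : b ∈ Set.Ioo c d
    · have ha' : a' ∈ Set.Ioo c d := ⟨ha.1.trans_le h1, h4.trans_lt hb.2⟩
      have hb' : b' ∈ Set.Ioo c d := ⟨ha.1.trans_le h3, h2.trans_lt hb.2⟩
      unfold uu
      rw [Set.indicator_of_mem ha, Set.indicator_of_mem hb, Set.indicator_of_mem ha',
        Set.indicator_of_mem hb']
      exact g_spread hg0 hlc h1 h2 h3 h4 hs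
    · unfold uu
      rw [Set.indicator_of_notMem hb, mul_zero]
      exact mul_nonneg (Set.indicator_nonneg (fun x _ => hg0 x) _)
        (Set.indicator_nonneg (fun x _ => hg0 x) _)
  · unfold uu
    rw [Set.indicator_of_notMem ha, zero_mul]
    exact mul_nonneg (Set.indicator_nonneg (fun x _ => hg0 x) _)
      (Set.indicator_nonneg (fun x _ => hg0 x) _)

lemma uu_int (hg_int : Integrable g) : Integrable (uu g c d) :=
  hg_int.indicator measurableSet_Ioo

lemma aesm_shift {f : ℝ → ℝ} (hf : AEStronglyMeasurable f (volume : Measure ℝ)) (v : ℝ) :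
    AEStronglyMeasurable (fun y => f (y + v)) (volume : Measure ℝ) :=
  hf.comp_quasiMeasurePreserving (measurePreserving_add_right volume v).quasiMeasurePreserving

lemma int_uu_mul (hg_int : Integrable g) (hg0 : ∀ y, 0 ≤ g y)
    (hM : ∀ y, uu g c d y ≤ M) (v : ℝ) :
    Integrable (fun y => uu g c d y * uu g c d (y + v)) := by
  apply Integrable.mono' ((uu_int hg_int).const_mul M)
  · exact ((uu_int hg_int).aestronglyMeasurable).mul
      (aesm_shift (uu_int hg_int).aestronglyMeasurable v)
  · filter_upwards with y
    rw [Real.norm_eq_abs, abs_of_nonneg (mul_nonneg (uu_nonneg hg0 y) (uu_nonneg hg0 _))]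
    calc uu g c d y * uu g c d (y + v) ≤ uu g c d y * M := by
          exact mul_le_mul_of_nonneg_left (hM _) (uu_nonneg hg0 y)
      _ = M * uu g c d y := mul_comm _ _

noncomputable def FF (g : ℝ → ℝ) (c d : ℝ) (v : ℝ) : ℝ :=
  ∫ y, uu g c d y * uu g c d (y + v)

lemma FF_nonneg (hg0 : ∀ y, 0 ≤ g y) (v : ℝ) : 0 ≤ FF g c d v :=
  integral_nonneg (fun y => mul_nonneg (uu_nonneg hg0 y) (uu_nonneg hg0 _))

lemma FF_le (hg_int : Integrable g) (hg0 : ∀ y, 0 ≤ g y) (hM : ∀ y, uu g c d y ≤ M)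
    (hM0 : 0 ≤ M) (v : ℝ) : FF g c d v ≤ M * ∫ y, uu g c d y := by
  rw [← integral_const_mul]
  apply integral_mono (int_uu_mul hg_int hg0 hM v) ((uu_int hg_int).const_mul M)
  intro y
  calc uu g c d y * uu g c d (y + v) ≤ uu g c d y * M :=
        mul_le_mul_of_nonneg_left (hM _) (uu_nonneg hg0 y)
    _ = M * uu g c d y := mul_comm _ _

lemma FF_antitone (hg_int : Integrable g) (hg0 : ∀ y, 0 ≤ g y)
    (hlc : ConcaveOn ℝ {y : ℝ | 0 < g y} (fun y => Real.log (g y)))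
    (hM : ∀ y, uu g c d y ≤ M)
    {v₁ v₂ : ℝ} (h0 : 0 ≤ v₁) (h12 : v₁ ≤ v₂) : FF g c d v₂ ≤ FF g c d v₁ := by
  set m := (v₂ - v₁) / 2 with hm
  have hm0 : 0 ≤ m := by simp [hm]; linarith
  have key : ∀ y, uu g c d y * uu g c d (y + v₂) ≤
      uu g c d (y + m) * uu g c d (y + m + v₁) := by
    intro y
    apply uu_spread hg0 hlc
    · linarith
    · linarith
    · linarith
    · linarith
    · ring
  calc FF g c d v₂ ≤ ∫ y, uu g c d (y + m) * uu g c d (y + m + v₁) := by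
        apply integral_mono (int_uu_mul hg_int hg0 hM v₂) ?_ key
        have : (fun y => uu g c d (y + m) * uu g c d (y + m + v₁)) =
            (fun z => uu g c d z * uu g c d (z + v₁)) ∘ (fun y => y + m) := by
          funext y; simp [Function.comp, add_assoc, add_comm v₁ m]
        rw [this]
        exact (int_uu_mul hg_int hg0 hM v₁).comp_add_right m
    _ = FF g c d v₁ := by
        rw [FF, ← integral_add_right_eq_self (fun z => uu g c d z * uu g c d (z + v₁)) m]


noncomputable def ax (g : ℝ → ℝ) (c : ℝ) : ℝ → ℝ := (Set.Ioi c).indicator g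

noncomputable def bx (g : ℝ → ℝ) (d v : ℝ) : ℝ → ℝ := fun y => (Set.Iio d).indicator g (y + v)

lemma axbx (hv : 0 ≤ v) (y : ℝ) :
    ax g c y * bx g d v y = uu g c d y * uu g c d (y + v) := by
  unfold ax bx uu
  by_cases hy : c < y
  · by_cases hyd : y + v < d
    · have m1 : y ∈ Set.Ioi c := hy
      have m2 : y + v ∈ Set.Iio d := hyd
      have m3 : y ∈ Set.Ioo c d := ⟨hy, by linarith⟩
      have m4 : y + v ∈ Set.Ioo c d := ⟨by linarith, hyd⟩
      rw [Set.indicator_of_mem m1, Set.indicator_of_mem m2, Set.indicator_of_mem m3,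
        Set.indicator_of_mem m4]
    · have m2 : y + v ∉ Set.Iio d := by simpa using hyd
      have m4 : y + v ∉ Set.Ioo c d := fun h => hyd h.2
      rw [Set.indicator_of_notMem m2, Set.indicator_of_notMem m4, mul_zero, mul_zero]
  · have m1 : y ∉ Set.Ioi c := by simpa using hy
    have m3 : y ∉ Set.Ioo c d := fun h => hy h.1
    rw [Set.indicator_of_notMem m1, Set.indicator_of_notMem m3, zero_mul, zero_mul]

lemma ax_bracket (hg0 : ∀ y, 0 ≤ g y) {c₁ c₂ y z : ℝ} (hc : c₁ ≤ c₂) (hzy : z ≤ y) :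
    ax g c₁ y * ax g c₂ z ≤ ax g c₂ y * ax g c₁ z := by
  unfold ax
  by_cases hz : c₂ < z
  · have m1 : z ∈ Set.Ioi c₂ := hz
    have m2 : y ∈ Set.Ioi c₁ := Set.mem_Ioi.mpr ((hc.trans_lt hz).trans_le hzy)
    have m3 : y ∈ Set.Ioi c₂ := Set.mem_Ioi.mpr (hz.trans_le hzy)
    have m4 : z ∈ Set.Ioi c₁ := Set.mem_Ioi.mpr (hc.trans_lt hz)
    rw [Set.indicator_of_mem m1, Set.indicator_of_mem m2, Set.indicator_of_mem m3,
      Set.indicator_of_mem m4]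
  · have m1 : z ∉ Set.Ioi c₂ := by simpa using hz
    rw [Set.indicator_of_notMem m1, mul_zero]
    exact mul_nonneg (Set.indicator_nonneg (fun x _ => hg0 x) _)
      (Set.indicator_nonneg (fun x _ => hg0 x) _)

lemma bx_bracket (hg0 : ∀ y, 0 ≤ g y)
    (hlc : ConcaveOn ℝ {y : ℝ | 0 < g y} (fun y => Real.log (g y)))
    {v₁ v₂ y z : ℝ} (hv : v₁ ≤ v₂) (hzy : z ≤ y) :
    bx g d v₂ y * bx g d v₁ z ≤ bx g d v₁ y * bx g d v₂ z := by
  unfold bx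
  by_cases hy2 : y + v₂ < d
  · by_cases hz1 : z + v₁ < d
    · have m1 : y + v₂ ∈ Set.Iio d := hy2
      have m2 : z + v₁ ∈ Set.Iio d := hz1
      have m3 : y + v₁ ∈ Set.Iio d := Set.mem_Iio.mpr (by linarith)
      have m4 : z + v₂ ∈ Set.Iio d := Set.mem_Iio.mpr (by linarith)
      rw [Set.indicator_of_mem m1, Set.indicator_of_mem m2, Set.indicator_of_mem m3,
        Set.indicator_of_mem m4]
      have key := g_spread hg0 hlc (a := z + v₁) (b := y + v₂) (a' := z + v₂) (b' := y + v₁)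
        (by linarith) (by linarith) (by linarith) (by linarith) (by ring)
      calc g (y + v₂) * g (z + v₁) = g (z + v₁) * g (y + v₂) := mul_comm _ _
        _ ≤ g (z + v₂) * g (y + v₁) := key
        _ = g (y + v₁) * g (z + v₂) := mul_comm _ _
    · have m2 : z + v₁ ∉ Set.Iio d := by simpa using hz1
      rw [Set.indicator_of_notMem m2, mul_zero]
      exact mul_nonneg (Set.indicator_nonneg (fun x _ => hg0 x) _)
        (Set.indicator_nonneg (fun x _ => hg0 x) _)
  · have m1 : y + v₂ ∉ Set.Iio d := by simpa using hy2
    rw [Set.indicator_of_notMem m1, zero_mul]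
    exact mul_nonneg (Set.indicator_nonneg (fun x _ => hg0 x) _)
      (Set.indicator_nonneg (fun x _ => hg0 x) _)

lemma lemA (hg_int : Integrable g) (hg0 : ∀ y, 0 ≤ g y)
    (hlc : ConcaveOn ℝ {y : ℝ | 0 < g y} (fun y => Real.log (g y)))
    {c₁ c₂ M₁ M₂ : ℝ} (hM₁ : ∀ y, uu g c₁ d y ≤ M₁) (hM₂ : ∀ y, uu g c₂ d y ≤ M₂)
    (hc : c₁ ≤ c₂) {v₁ v₂ : ℝ} (h0 : 0 ≤ v₁) (h12 : v₁ ≤ v₂) :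
    FF g c₂ d v₂ * FF g c₁ d v₁ ≤ FF g c₂ d v₁ * FF g c₁ d v₂ := by
  have hv₂ : 0 ≤ v₂ := h0.trans h12
  set f11 := fun y => ax g c₁ y * bx g d v₁ y with hf11
  set f12 := fun y => ax g c₁ y * bx g d v₂ y with hf12
  set f21 := fun y => ax g c₂ y * bx g d v₁ y with hf21
  set f22 := fun y => ax g c₂ y * bx g d v₂ y with hf22
  have e11 : f11 = fun y => uu g c₁ d y * uu g c₁ d (y + v₁) := funext (fun y => axbx h0 y)
  have e12 : f12 = fun y => uu g c₁ d y * uu g c₁ d (y + v₂) := funext (fun y => axbx hv₂ y)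
  have e21 : f21 = fun y => uu g c₂ d y * uu g c₂ d (y + v₁) := funext (fun y => axbx h0 y)
  have e22 : f22 = fun y => uu g c₂ d y * uu g c₂ d (y + v₂) := funext (fun y => axbx hv₂ y)
  have i11 : Integrable f11 := by rw [e11]; exact int_uu_mul hg_int hg0 hM₁ v₁
  have i12 : Integrable f12 := by rw [e12]; exact int_uu_mul hg_int hg0 hM₁ v₂
  have i21 : Integrable f21 := by rw [e21]; exact int_uu_mul hg_int hg0 hM₂ v₁
  have i22 : Integrable f22 := by rw [e22]; exact int_uu_mul hg_int hg0 hM₂ v₂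
  have F11 : ∫ y, f11 y = FF g c₁ d v₁ := by rw [e11]; rfl
  have F12 : ∫ y, f12 y = FF g c₁ d v₂ := by rw [e12]; rfl
  have F21 : ∫ y, f21 y = FF g c₂ d v₁ := by rw [e21]; rfl
  have F22 : ∫ y, f22 y = FF g c₂ d v₂ := by rw [e22]; rfl
  have ia := i21.mul_prod i12
  have ib := i12.mul_prod i21
  have ic := i22.mul_prod i11
  have id' := i11.mul_prod i22
  have key : 0 ≤ ∫ p : ℝ × ℝ, ((f21 p.1 * f12 p.2 + f12 p.1 * f21 p.2)
      - (f22 p.1 * f11 p.2 + f11 p.1 * f22 p.2)) ∂(volume.prod volume) := by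
    refine integral_nonneg fun p => ?_
    have factored : (f21 p.1 * f12 p.2 + f12 p.1 * f21 p.2)
        - (f22 p.1 * f11 p.2 + f11 p.1 * f22 p.2)
        = (ax g c₂ p.1 * ax g c₁ p.2 - ax g c₁ p.1 * ax g c₂ p.2)
          * (bx g d v₁ p.1 * bx g d v₂ p.2 - bx g d v₂ p.1 * bx g d v₁ p.2) := by
      simp only [hf11, hf12, hf21, hf22]; ring
    dsimp only
    rw [factored]
    rcases le_total p.2 p.1 with hzy | hzy
    · exact mul_nonneg (sub_nonneg.mpr (ax_bracket hg0 hc hzy))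
        (sub_nonneg.mpr (bx_bracket hg0 hlc h12 hzy))
    · have base := mul_nonneg (sub_nonneg.mpr (ax_bracket (g := g) hg0 hc hzy))
        (sub_nonneg.mpr (bx_bracket (g := g) (d := d) hg0 hlc h12 hzy))
      have eq : (ax g c₂ p.1 * ax g c₁ p.2 - ax g c₁ p.1 * ax g c₂ p.2)
          * (bx g d v₁ p.1 * bx g d v₂ p.2 - bx g d v₂ p.1 * bx g d v₁ p.2)
          = (ax g c₂ p.2 * ax g c₁ p.1 - ax g c₁ p.2 * ax g c₂ p.1)
          * (bx g d v₁ p.2 * bx g d v₂ p.1 - bx g d v₂ p.2 * bx g d v₁ p.1) := by ring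
      rw [eq]; exact base
  have expand : ∫ p : ℝ × ℝ, ((f21 p.1 * f12 p.2 + f12 p.1 * f21 p.2)
      - (f22 p.1 * f11 p.2 + f11 p.1 * f22 p.2)) ∂(volume.prod volume)
      = (FF g c₂ d v₁ * FF g c₁ d v₂ + FF g c₁ d v₂ * FF g c₂ d v₁)
        - (FF g c₂ d v₂ * FF g c₁ d v₁ + FF g c₁ d v₁ * FF g c₂ d v₂) := by
    have iab : Integrable (fun z : ℝ × ℝ => f21 z.1 * f12 z.2 + f12 z.1 * f21 z.2)
        (volume.prod volume) := ia.add ib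
    have icd : Integrable (fun z : ℝ × ℝ => f22 z.1 * f11 z.2 + f11 z.1 * f22 z.2)
        (volume.prod volume) := ic.add id'
    rw [integral_sub iab icd, integral_add ia ib, integral_add ic id',
      integral_prod_mul, integral_prod_mul, integral_prod_mul, integral_prod_mul,
      F11, F12, F21, F22]
  rw [expand] at key
  linarith

lemma FF_aesm (hg_int : Integrable g) :
    AEStronglyMeasurable (FF g c d) (volume : Measure ℝ) := by
  obtain ⟨u', hu'meas, hu'⟩ := (uu_int (c := c) (d := d) hg_int).aestronglyMeasurable
  have hmeas : StronglyMeasurable fun q : ℝ × ℝ => u' q.2 * u' (q.2 + q.1) :=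
    (hu'meas.comp_measurable measurable_snd).mul
      (hu'meas.comp_measurable (measurable_snd.add measurable_fst))
  have hFF : FF g c d = fun v => ∫ y, u' y * u' (y + v) := by
    funext v
    apply integral_congr_ae
    have hshift : (fun y => uu g c d (y + v)) =ᵐ[volume] fun y => u' (y + v) := by
      have hq := (measurePreserving_add_right volume v).quasiMeasurePreserving
      have := hq.ae_eq_comp hu'
      exact this
    exact hu'.mul hshift
  rw [hFF]
  exact (MeasureTheory.StronglyMeasurable.integral_prod_right' (ν := volume) hmeas).aestronglyMeasurable

lemma mass (hg_int : Integrable g) (hg0 : ∀ y, 0 ≤ g y) :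
    ∫ v in Set.Ioi (0:ℝ), FF g c d v = (∫ y, uu g c d y) ^ 2 / 2 := by
  set u := uu g c d with hu
  have hu_int : Integrable u := uu_int hg_int
  have hun : ∀ y, 0 ≤ u y := uu_nonneg hg0
  have huu : Integrable (fun z : ℝ × ℝ => u z.1 * u z.2) (volume.prod volume) :=
    hu_int.mul_prod hu_int
  set f : ℝ × ℝ → ℝ := fun p => if p.1 < p.2 then u p.1 * u p.2 else 0 with hf
  set f' : ℝ × ℝ → ℝ := fun p => if p.2 < p.1 then u p.1 * u p.2 else 0 with hf'
  have hfm : AEStronglyMeasurable f (volume.prod volume) := by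
    have heq : f = Set.indicator {p : ℝ × ℝ | p.1 < p.2} (fun p => u p.1 * u p.2) := by
      funext p; simp [hf, Set.indicator_apply]
    rw [heq]
    exact ((hu_int.aestronglyMeasurable.comp_fst).mul (hu_int.aestronglyMeasurable.comp_snd)).indicator
      (measurableSet_lt measurable_fst measurable_snd)
  have hf'm : AEStronglyMeasurable f' (volume.prod volume) := by
    have heq : f' = Set.indicator {p : ℝ × ℝ | p.2 < p.1} (fun p => u p.1 * u p.2) := by
      funext p; simp [hf', Set.indicator_apply]
    rw [heq]
    exact ((hu_int.aestronglyMeasurable.comp_fst).mul (hu_int.aestronglyMeasurable.comp_snd)).indicator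
      (measurableSet_lt measurable_snd measurable_fst)
  have hbound : ∀ (h : ℝ × ℝ → ℝ), (∀ p, h p = 0 ∨ h p = u p.1 * u p.2) →
      ∀ᵐ p ∂(volume.prod volume), ‖h p‖ ≤ u p.1 * u p.2 := by
    intro h hh
    filter_upwards with p
    rcases hh p with h0 | h0 <;> rw [h0]
    · simp [mul_nonneg (hun _) (hun _)]
    · rw [Real.norm_eq_abs, abs_of_nonneg (mul_nonneg (hun _) (hun _))]
  have hfi : Integrable f (volume.prod volume) := by
    apply huu.mono' hfm
    apply hbound
    intro p; by_cases h : p.1 < p.2 <;> simp [hf, h]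
  have hf'i : Integrable f' (volume.prod volume) := by
    apply huu.mono' hf'm
    apply hbound
    intro p; by_cases h : p.2 < p.1 <;> simp [hf', h]
  have hdiag : (volume.prod volume) {p : ℝ × ℝ | p.1 = p.2} = 0 := by
    have hmeasd : MeasurableSet {p : ℝ × ℝ | p.1 = p.2} :=
      measurableSet_eq_fun measurable_fst measurable_snd
    rw [Measure.prod_apply hmeasd]
    have : ∀ x : ℝ, (volume (Prod.mk x ⁻¹' {p : ℝ × ℝ | p.1 = p.2})) = 0 := by
      intro x
      have : (Prod.mk x ⁻¹' {p : ℝ × ℝ | p.1 = p.2}) = {x} := by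
        ext y; simp [eq_comm]
      rw [this]; exact measure_singleton x
    simp [this]
  have hWW : (∫ p, f p ∂(volume.prod volume)) + (∫ p, f' p ∂(volume.prod volume))
      = (∫ y, u y) ^ 2 := by
    rw [← integral_add hfi hf'i]
    have hae : (fun p => f p + f' p) =ᵐ[volume.prod volume] fun z : ℝ × ℝ => u z.1 * u z.2 := by
      rw [Filter.eventuallyEq_iff_exists_mem]
      refine ⟨{p : ℝ × ℝ | p.1 = p.2}ᶜ, ?_, ?_⟩
      · rw [mem_ae_iff]; simpa using hdiag
      · intro p hp
        have hne : p.1 ≠ p.2 := hp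
        rcases hne.lt_or_gt with h | h <;> simp [hf, hf', h, asymm h]
    rw [integral_congr_ae hae, integral_prod_mul]
    ring
  have hswap : (∫ p, f' p ∂(volume.prod volume)) = ∫ p, f p ∂(volume.prod volume) := by
    rw [← integral_prod_swap f]
    congr 1; funext z
    by_cases h : z.2 < z.1 <;> simp [hf, hf', Prod.swap, h, mul_comm]
  set ψ : ℝ × ℝ → ℝ × ℝ := fun z => (z.2, z.2 + z.1) with hψdef
  have hψ : MeasurePreserving ψ (volume.prod volume) (volume.prod volume) :=
    measurePreserving_prod_add_swap volume volume
  have hWψ : ∫ p, f p ∂(volume.prod volume) = ∫ z, f (ψ z) ∂(volume.prod volume) := by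
    conv_lhs => rw [← hψ.map_eq]
    exact integral_map hψ.measurable.aemeasurable (by rw [hψ.map_eq]; exact hfm)
  have hfψi : Integrable (fun z => f (ψ z)) (volume.prod volume) :=
    (hψ.integrable_comp hfm).mpr hfi
  have hiter : ∫ z, f (ψ z) ∂(volume.prod volume)
      = ∫ v, ∫ y, (if 0 < v then u y * u (y + v) else 0) := by
    rw [MeasureTheory.integral_prod _ hfψi]
    congr 1; funext v
    congr 1; funext y
    show (if y < y + v then u y * u (y + v) else 0) = _
    by_cases h : 0 < v
    · rw [if_pos (by linarith), if_pos h]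
    · rw [if_neg (by linarith), if_neg h]
  have hinner : (fun v : ℝ => ∫ y, (if 0 < v then u y * u (y + v) else 0))
      = Set.indicator (Set.Ioi (0:ℝ)) (FF g c d) := by
    funext v
    by_cases h : 0 < v
    · simp only [if_pos h]
      rw [Set.indicator_of_mem (Set.mem_Ioi.mpr h)]
      rfl
    · simp only [if_neg h, integral_zero]
      rw [Set.indicator_of_notMem (by simpa using h)]
  have hind : ∫ v, Set.indicator (Set.Ioi (0:ℝ)) (FF g c d) v
      = ∫ v in Set.Ioi (0:ℝ), FF g c d v := integral_indicator measurableSet_Ioi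
  have : ∫ v in Set.Ioi (0:ℝ), FF g c d v = ∫ p, f p ∂(volume.prod volume) := by
    rw [← hind, ← hinner, ← hiter, ← hWψ]
  rw [this]
  linarith [hWW, hswap]

lemma g_bdd (hg0 : ∀ y, 0 ≤ g y)
    (hlc : ConcaveOn ℝ {y : ℝ | 0 < g y} (fun y => Real.log (g y)))
    {a b : ℝ} (hpos : 0 < ∫ y in Set.Ioc a b, g y) :
    ∃ M, 0 ≤ M ∧ ∀ y ∈ Set.Icc a b, g y ≤ M := by
  have hnull : volume ({y : ℝ | 0 < g y} ∩ Set.Ioc a b) ≠ 0 := by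
    intro hnull
    have hae : ∀ᵐ y ∂(volume : Measure ℝ), y ∈ Set.Ioc a b → g y = 0 := by
      rw [ae_iff]
      apply measure_mono_null _ hnull
      intro y hy
      simp only [Set.mem_setOf_eq, not_forall] at hy
      exact ⟨lt_of_le_of_ne (hg0 y) (Ne.symm hy.2), hy.1⟩
    have : ∫ y in Set.Ioc a b, g y = ∫ _ in Set.Ioc a b, (0:ℝ) :=
      setIntegral_congr_ae measurableSet_Ioc (hae.mono fun y h hy => h hy)
    simp only [integral_zero] at this
    linarith
  have hnontriv : Set.Nontrivial ({y : ℝ | 0 < g y} ∩ Set.Ioc a b) := by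
    by_contra hsub
    rw [Set.not_nontrivial_iff] at hsub
    exact hnull (hsub.measure_zero _)
  obtain ⟨p, hp, q, hq, hpq⟩ : ∃ p ∈ ({y : ℝ | 0 < g y} ∩ Set.Ioc a b),
      ∃ q ∈ ({y : ℝ | 0 < g y} ∩ Set.Ioc a b), p < q := by
    obtain ⟨x, hx, y, hy, hxy⟩ := hnontriv
    rcases hxy.lt_or_gt with h | h
    · exact ⟨x, hx, y, hy, h⟩
    · exact ⟨y, hy, x, hx, h⟩
  set m : ℝ := (p + q) / 2 with hm
  have hpS : p ∈ {y : ℝ | 0 < g y} := hp.1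
  have hqS : q ∈ {y : ℝ | 0 < g y} := hq.1
  have hmS : m ∈ {y : ℝ | 0 < g y} := by
    have := hlc.1 hpS hqS (by norm_num : (0:ℝ) ≤ 1/2) (by norm_num : (0:ℝ) ≤ 1/2)
      (by norm_num)
    have heq : (1/2 : ℝ) • p + (1/2 : ℝ) • q = m := by
      rw [smul_eq_mul, smul_eq_mul, hm]; ring
    rwa [heq] at this
  have hap : a < p := hp.2.1
  have hpb : p ≤ b := hp.2.2
  have haq : a < q := hq.2.1
  have hqb : q ≤ b := hq.2.2
  have hpm : p < m := by rw [hm]; linarith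
  have hmq : m < q := by rw [hm]; linarith
  set Lp := Real.log (g p) with hLp
  set Lm := Real.log (g m) with hLm
  set Lq := Real.log (g q) with hLq
  set T : ℝ := |Lp| + |Lm| + |Lq| with hT
  set K : ℝ := T * (1 + (b - p)/(m - p) + (q - a)/(q - m)) with hK
  have hT0 : 0 ≤ T := by positivity
  have hD1 : 0 ≤ (b - p)/(m - p) := div_nonneg (by linarith) (by linarith)
  have hD2 : 0 ≤ (q - a)/(q - m) := div_nonneg (by linarith) (by linarith)
  have hK0 : 0 ≤ K := by
    rw [hK]
    apply mul_nonneg hT0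
    linarith
  refine ⟨Real.exp K, (Real.exp_pos K).le, ?_⟩
  intro x hx
  by_cases hgx : 0 < g x
  swap
  · have : g x = 0 := le_antisymm (not_lt.mp hgx) (hg0 x)
    rw [this]; exact (Real.exp_pos K).le
  set Lx := Real.log (g x) with hLx
  suffices hlog : Lx ≤ K by
    calc g x = Real.exp Lx := (Real.exp_log hgx).symm
      _ ≤ Real.exp K := Real.exp_le_exp.mpr hlog
  by_cases hLxsign : Lx ≤ 0
  · linarith
  push_neg at hLxsign
  have hxS : x ∈ {y : ℝ | 0 < g y} := hgx
  rcases le_or_gt x m with hxm | hxm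
  · -- x ≤ m < q : use p-free bound with (x, q)
    have hqx : 0 < q - x := by linarith
    set A : ℝ := (q - m)/(q - x) with hA
    set B : ℝ := (m - x)/(q - x) with hB
    have hA0 : 0 ≤ A := div_nonneg (by linarith) hqx.le
    have hB0 : 0 ≤ B := div_nonneg (by linarith) hqx.le
    have hAB : A + B = 1 := by rw [hA, hB]; field_simp; ring
    have hconc := hlc.2 hxS hqS hA0 hB0 hAB
    have hmix : A • x + B • q = m := by
      rw [smul_eq_mul, smul_eq_mul, hA, hB]
      field_simp; ring
    rw [hmix, smul_eq_mul, smul_eq_mul] at hconc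
    -- hconc : A * Lx + B * Lq ≤ Lm
    have hB1 : B ≤ 1 := by
      rw [hB, div_le_one hqx]; linarith
    have h2 : B * (-Lq) ≤ B * |Lq| := mul_le_mul_of_nonneg_left (neg_le_abs Lq) hB0
    have h3 : B * |Lq| ≤ 1 * |Lq| := mul_le_mul_of_nonneg_right hB1 (abs_nonneg _)
    have h1 : A * Lx ≤ |Lm| + |Lq| := by
      linarith [hconc, h2, h3, le_abs_self Lm]
    have hAlb : (q - m)/(q - a) ≤ A := by
      rw [hA]
      apply div_le_div_of_nonneg_left (by linarith) hqx (by linarith [hx.1])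
    have h4 : (q - m)/(q - a) * Lx ≤ A * Lx := mul_le_mul_of_nonneg_right hAlb hLxsign.le
    have hα : 0 < (q - m)/(q - a) := div_pos (by linarith) (by linarith)
    have h5 : Lx ≤ (|Lm| + |Lq|) / ((q - m)/(q - a)) := by
      rw [le_div_iff₀ hα]; linarith
    have h6 : (|Lm| + |Lq|) / ((q - m)/(q - a)) = (|Lm| + |Lq|) * ((q - a)/(q - m)) := by
      rw [div_div_eq_mul_div, mul_div_assoc]
    have h7 : (|Lm| + |Lq|) * ((q - a)/(q - m)) ≤ K := by
      rw [hK]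
      have hTle : |Lm| + |Lq| ≤ T := by rw [hT]; linarith [abs_nonneg Lp]
      exact mul_le_mul hTle (by linarith) hD2 hT0
    linarith
  · -- m < x ≤ b : use q-free bound with (p, x)
    have hxp : 0 < x - p := by linarith
    set A : ℝ := (x - m)/(x - p) with hA
    set B : ℝ := (m - p)/(x - p) with hB
    have hA0 : 0 ≤ A := div_nonneg (by linarith) hxp.le
    have hB0 : 0 ≤ B := div_nonneg (by linarith) hxp.le
    have hAB : A + B = 1 := by rw [hA, hB]; field_simp; ring
    have hconc := hlc.2 hpS hxS hA0 hB0 hAB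
    have hmix : A • p + B • x = m := by
      rw [smul_eq_mul, smul_eq_mul, hA, hB]
      field_simp; ring
    rw [hmix, smul_eq_mul, smul_eq_mul] at hconc
    -- hconc : A * Lp + B * Lx ≤ Lm
    have hA1 : A ≤ 1 := by
      rw [hA, div_le_one hxp]; linarith
    have h2 : A * (-Lp) ≤ A * |Lp| := mul_le_mul_of_nonneg_left (neg_le_abs Lp) hA0
    have h3 : A * |Lp| ≤ 1 * |Lp| := mul_le_mul_of_nonneg_right hA1 (abs_nonneg _)
    have h1 : B * Lx ≤ |Lm| + |Lp| := by
      linarith [hconc, h2, h3, le_abs_self Lm]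
    have hBlb : (m - p)/(b - p) ≤ B := by
      rw [hB]
      apply div_le_div_of_nonneg_left (by linarith) hxp (by linarith [hx.2])
    have h4 : (m - p)/(b - p) * Lx ≤ B * Lx := mul_le_mul_of_nonneg_right hBlb hLxsign.le
    have hα : 0 < (m - p)/(b - p) := div_pos (by linarith) (by linarith)
    have h5 : Lx ≤ (|Lm| + |Lp|) / ((m - p)/(b - p)) := by
      rw [le_div_iff₀ hα]; linarith
    have h6 : (|Lm| + |Lp|) / ((m - p)/(b - p)) = (|Lm| + |Lp|) * ((b - p)/(m - p)) := by
      rw [div_div_eq_mul_div, mul_div_assoc]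
    have h7 : (|Lm| + |Lp|) * ((b - p)/(m - p)) ≤ K := by
      rw [hK]
      have hTle : |Lm| + |Lp| ≤ T := by rw [hT]; linarith [abs_nonneg Lq]
      exact mul_le_mul hTle (by linarith) hD1 hT0
    linarith

lemma FF_zero {v : ℝ} (hv : d - c ≤ v) : FF g c d v = 0 := by
  have hz : (fun y => uu g c d y * uu g c d (y + v)) = fun _ => (0:ℝ) := by
    funext y
    by_cases hy : y ∈ Set.Ioo c d
    · have hnot : y + v ∉ Set.Ioo c d := by
        intro h
        have h1 := hy.1
        have h2 := h.2
        simp only [Set.mem_Ioo] at *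
        linarith
      rw [uu, Set.indicator_of_notMem hnot, mul_zero]
    · rw [uu, Set.indicator_of_notMem hy, zero_mul]
  rw [FF, hz, integral_zero]

lemma integrableOn_FF {L : ℝ} (hg_int : Integrable g) (hg0 : ∀ y, 0 ≤ g y)
    (hM : ∀ y, uu g c d y ≤ M) (hM0 : 0 ≤ M) :
    IntegrableOn (FF g c d) (Set.Ioc (0:ℝ) L) volume := by
  apply Integrable.mono' (g := fun _ => M * ∫ y, uu g c d y)
  · exact integrableOn_const measure_Ioc_lt_top.ne
  · exact (FF_aesm hg_int).restrict
  · filter_upwards with v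
    rw [Real.norm_eq_abs, abs_of_nonneg (FF_nonneg hg0 v)]
    exact FF_le hg_int hg0 hM hM0 v

lemma integrableOn_FF_div {L Q : ℝ} (hg_int : Integrable g) (hg0 : ∀ y, 0 ≤ g y)
    (hM : ∀ y, uu g c d y ≤ M) (hM0 : 0 ≤ M) (hQ : 0 < Q) :
    IntegrableOn (fun v => FF g c d v / Q) (Set.Ioc (0:ℝ) L) volume := by
  apply Integrable.mono' (g := fun _ => M * (∫ y, uu g c d y) / Q)
  · exact integrableOn_const measure_Ioc_lt_top.ne
  · exact ((FF_aesm hg_int).mul_const Q⁻¹).restrict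
  · filter_upwards with v
    rw [Real.norm_eq_abs, abs_of_nonneg (div_nonneg (FF_nonneg hg0 v) hQ.le)]
    exact (div_le_div_iff_of_pos_right hQ).mpr (FF_le hg_int hg0 hM hM0 v)

lemma integrableOn_w_FF {L Q : ℝ} {w' : ℝ → ℝ}
    (hg_int : Integrable g) (hg0 : ∀ y, 0 ≤ g y)
    (hM : ∀ y, uu g c d y ≤ M) (hM0 : 0 ≤ M)
    (hw'meas : Measurable w') (hw'0 : ∀ v, 0 ≤ w' v) (hw'anti : Antitone w')
    (hQ : 0 < Q) :
    IntegrableOn (fun v => w' v * (FF g c d v / Q) ^ 2) (Set.Ioc (0:ℝ) L) volume := by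
  set U := ∫ y, uu g c d y with hUdef
  have hU0 : 0 ≤ U := integral_nonneg (fun y => uu_nonneg hg0 y)
  apply Integrable.mono' (g := fun _ => w' 0 * (M * U / Q) ^ 2)
  · exact integrableOn_const measure_Ioc_lt_top.ne
  · exact (hw'meas.aestronglyMeasurable.mul
      (((FF_aesm hg_int).mul_const Q⁻¹).pow 2)).restrict
  · rw [ae_restrict_iff' measurableSet_Ioc]
    filter_upwards with v hv
    have h1 : 0 ≤ FF g c d v := FF_nonneg hg0 v
    have h2 : FF g c d v ≤ M * U := FF_le hg_int hg0 hM hM0 v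
    rw [Real.norm_eq_abs, abs_of_nonneg (mul_nonneg (hw'0 v) (sq_nonneg _))]
    have hw0v : w' v ≤ w' 0 := hw'anti (le_of_lt hv.1)
    have hsq : (FF g c d v / Q) ^ 2 ≤ (M * U / Q) ^ 2 :=
      pow_le_pow_left₀ (div_nonneg h1 hQ.le) ((div_le_div_iff_of_pos_right hQ).mpr h2) 2
    exact mul_le_mul hw0v hsq (sq_nonneg _) (hw'0 0)

lemma mass_Ioc {L : ℝ} (hg_int : Integrable g) (hg0 : ∀ y, 0 ≤ g y)
    (hM : ∀ y, uu g c d y ≤ M) (hM0 : 0 ≤ M) (hL : d - c ≤ L) (hL0 : 0 ≤ L) :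
    ∫ v in Set.Ioc (0:ℝ) L, FF g c d v = (∫ y, uu g c d y) ^ 2 / 2 := by
  rw [← mass hg_int hg0 (c := c) (d := d), ← Set.Ioc_union_Ioi_eq_Ioi hL0,
    setIntegral_union Set.Ioc_disjoint_Ioi_same measurableSet_Ioi
      (integrableOn_FF hg_int hg0 hM hM0)
      (IntegrableOn.congr_fun (integrableOn_zero)
        (fun v hv => (FF_zero (hL.trans (le_of_lt hv))).symm) measurableSet_Ioi)]
  have hzero : Set.EqOn (FF g c d) (fun _ => (0:ℝ)) (Set.Ioi L) := fun v hv =>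
    FF_zero (hL.trans (le_of_lt hv))
  rw [setIntegral_congr_fun measurableSet_Ioi hzero]
  simp

end WExtropy

open WExtropy in
theorem weighted_extropy_decreasing_in_c
    (g G w : ℝ → ℝ)
    (hg_nonneg : ∀ y, 0 ≤ g y)
    (hg_int : Integrable g)
    (hG : ∀ y, G y = ∫ t in Set.Iic y, g t)
    (hlc : ConcaveOn ℝ {y : ℝ | 0 < g y} (fun y => Real.log (g y)))
    (hw_nonneg : ∀ v, 0 ≤ v → 0 ≤ w v)
    (hw_dec : AntitoneOn w (Set.Ici 0))
    (c₁ c₂ d : ℝ) (hc : c₁ ≤ c₂) (hc₂d : c₂ < d)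
    (hG₁ : G c₁ < G d) (hG₂ : G c₂ < G d) :
    -(1 / 2) * ∫ v in (0:ℝ)..(d - c₂),
        w v * ((∫ y in (c₂ + v)..d, g (y - v) * g y) / (G d - G c₂) ^ 2) ^ 2
      ≤ -(1 / 2) * ∫ v in (0:ℝ)..(d - c₁),
        w v * ((∫ y in (c₁ + v)..d, g (y - v) * g y) / (G d - G c₁) ^ 2) ^ 2 := by
  classical
  have hc₁d : c₁ < d := lt_of_le_of_lt hc hc₂d
  have hP₁pos : 0 < G d - G c₁ := sub_pos.mpr hG₁
  have hP₂pos : 0 < G d - G c₂ := sub_pos.mpr hG₂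
  have hIocP : ∀ c : ℝ, c ≤ d → G d - G c = ∫ y in Set.Ioc c d, g y := by
    intro c hcd
    rw [hG d, hG c, intervalIntegral.integral_Iic_sub_Iic hg_int.integrableOn hg_int.integrableOn,
      intervalIntegral.integral_of_le hcd]
  have hU : ∀ c : ℝ, c ≤ d → (∫ y, uu g c d y) = G d - G c := by
    intro c hcd
    rw [uu, integral_indicator measurableSet_Ioo, ← integral_Ioc_eq_integral_Ioo, ← hIocP c hcd]
  obtain ⟨M, hM0, hMb⟩ := g_bdd hg_nonneg hlc (a := c₁) (b := d)
    (by rw [← hIocP c₁ hc₁d.le]; exact hP₁pos)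
  have hM₁ : ∀ y, uu g c₁ d y ≤ M := fun y => uu_le hg_nonneg hMb le_rfl hM0 y
  have hM₂ : ∀ y, uu g c₂ d y ≤ M := fun y => uu_le hg_nonneg hMb hc hM0 y
  set w' : ℝ → ℝ := fun v => w (max v 0) with hw'def
  have hw'anti : Antitone w' := fun s t hst =>
    hw_dec (Set.mem_Ici.mpr (le_max_right s 0)) (Set.mem_Ici.mpr (le_max_right t 0))
      (max_le_max hst le_rfl)
  have hw'0 : ∀ v, 0 ≤ w' v := fun v => hw_nonneg _ (le_max_right v 0)
  have hw'meas : Measurable w' := hw'anti.measurable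
  have hQ₁ : (0:ℝ) < (G d - G c₁) ^ 2 := by positivity
  have hQ₂ : (0:ℝ) < (G d - G c₂) ^ 2 := by positivity
  -- convert the interval integrals to set integrals of FF
  have hkey : ∀ c : ℝ, c < d →
      (∫ v in (0:ℝ)..(d - c),
        w v * ((∫ y in (c + v)..d, g (y - v) * g y) / (G d - G c) ^ 2) ^ 2)
      = ∫ v in Set.Ioc (0:ℝ) (d - c), w' v * (FF g c d v / (G d - G c) ^ 2) ^ 2 := by
    intro c hcd
    rw [intervalIntegral.integral_of_le (by linarith : (0:ℝ) ≤ d - c)]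
    apply setIntegral_congr_fun measurableSet_Ioc
    intro v hv
    have hv0 : 0 < v := hv.1
    have hvL : v ≤ d - c := hv.2
    have hwv : w v = w' v := by rw [hw'def]; simp [max_eq_left hv0.le]
    have hN : (∫ y in (c + v)..d, g (y - v) * g y) = FF g c d v := by
      have h1 := intervalIntegral.integral_comp_add_right
        (a := c) (b := d - v) (f := fun y => g (y - v) * g y) v
      simp only [add_sub_cancel_right, sub_add_cancel] at h1
      rw [← h1, intervalIntegral.integral_of_le (by linarith : c ≤ d - v),
        integral_Ioc_eq_integral_Ioo, ← integral_indicator measurableSet_Ioo]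
      rw [FF]
      congr 1
      funext y
      by_cases hy : y ∈ Set.Ioo c (d - v)
      · rw [Set.indicator_of_mem hy]
        have m3 : y ∈ Set.Ioo c d := ⟨hy.1, by linarith [hy.2]⟩
        have m4 : y + v ∈ Set.Ioo c d := ⟨by linarith [hy.1], by linarith [hy.2]⟩
        rw [uu, Set.indicator_of_mem m3, Set.indicator_of_mem m4]
      · rw [Set.indicator_of_notMem hy]
        rw [Set.mem_Ioo, not_and_or] at hy
        rcases hy with hy | hy
        · rw [uu, Set.indicator_of_notMem (fun h => hy h.1), zero_mul]
        · have hnot : y + v ∉ Set.Ioo c d := by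
            intro h
            exact hy (by linarith [h.2] : y < d - v)
          rw [uu, Set.indicator_of_notMem hnot, mul_zero]
    dsimp only
    rw [hwv, hN]
  rw [hkey c₁ hc₁d, hkey c₂ hc₂d]
  -- extend the c₂-integral to Ioc 0 (d - c₁)
  have hext : (∫ v in Set.Ioc (0:ℝ) (d - c₂), w' v * (FF g c₂ d v / (G d - G c₂) ^ 2) ^ 2)
      = ∫ v in Set.Ioc (0:ℝ) (d - c₁), w' v * (FF g c₂ d v / (G d - G c₂) ^ 2) ^ 2 := by
    rw [← Set.Ioc_union_Ioc_eq_Ioc (by linarith : (0:ℝ) ≤ d - c₂)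
        (by linarith : d - c₂ ≤ d - c₁),
      setIntegral_union (Set.Ioc_disjoint_Ioc_of_le le_rfl) measurableSet_Ioc
        (integrableOn_w_FF hg_int hg_nonneg hM₂ hM0 hw'meas hw'0 hw'anti hQ₂)
        (IntegrableOn.congr_fun (integrableOn_zero)
          (fun v hv => by simp [FF_zero (le_of_lt hv.1)]) measurableSet_Ioc)]
    have hzero : Set.EqOn (fun v => w' v * (FF g c₂ d v / (G d - G c₂) ^ 2) ^ 2)
        (fun _ => (0:ℝ)) (Set.Ioc (d - c₂) (d - c₁)) := by
      intro v hv
      simp [FF_zero (le_of_lt hv.1)]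
    rw [setIntegral_congr_fun measurableSet_Ioc hzero]
    simp
  rw [hext]
  -- main inequality
  suffices hfinal : (∫ v in Set.Ioc (0:ℝ) (d - c₁), w' v * (FF g c₁ d v / (G d - G c₁) ^ 2) ^ 2)
      ≤ ∫ v in Set.Ioc (0:ℝ) (d - c₁), w' v * (FF g c₂ d v / (G d - G c₂) ^ 2) ^ 2 by
    linarith
  have int_w₁ := integrableOn_w_FF (L := d - c₁) hg_int hg_nonneg hM₁ hM0 hw'meas hw'0 hw'anti hQ₁
  have int_w₂ := integrableOn_w_FF (L := d - c₁) hg_int hg_nonneg hM₂ hM0 hw'meas hw'0 hw'anti hQ₂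
  have int_d₁ := integrableOn_FF_div (L := d - c₁) hg_int hg_nonneg hM₁ hM0 hQ₁
  have int_d₂ := integrableOn_FF_div (L := d - c₁) hg_int hg_nonneg hM₂ hM0 hQ₂
  have hmass₁ : ∫ v in Set.Ioc (0:ℝ) (d - c₁), FF g c₁ d v / (G d - G c₁) ^ 2 = 1 / 2 := by
    rw [integral_div, mass_Ioc hg_int hg_nonneg hM₁ hM0 le_rfl (by linarith), hU c₁ hc₁d.le]
    field_simp
  have hmass₂ : ∫ v in Set.Ioc (0:ℝ) (d - c₁), FF g c₂ d v / (G d - G c₂) ^ 2 = 1 / 2 := by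
    rw [integral_div, mass_Ioc hg_int hg_nonneg hM₂ hM0 (by linarith) (by linarith), hU c₂ hc₂d.le]
    field_simp
  by_cases hcase : ∃ v ∈ Set.Ioc (0:ℝ) (d - c₁),
      FF g c₂ d v / (G d - G c₂) ^ 2 < FF g c₁ d v / (G d - G c₁) ^ 2
  swap
  · push_neg at hcase
    apply setIntegral_mono_on int_w₁ int_w₂ measurableSet_Ioc
    intro v hv
    exact mul_le_mul_of_nonneg_left
      (pow_le_pow_left₀ (div_nonneg (FF_nonneg hg_nonneg v) hQ₁.le) (hcase v hv) 2) (hw'0 v)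
  · obtain ⟨v₁, hv₁I, hv₁lt⟩ := hcase
    set E : Set ℝ := {v : ℝ | v ∈ Set.Ioc (0:ℝ) (d - c₁) ∧
        FF g c₂ d v / (G d - G c₂) ^ 2 < FF g c₁ d v / (G d - G c₁) ^ 2} with hE
    have hEne : E.Nonempty := ⟨v₁, hv₁I, hv₁lt⟩
    have hEbdd : BddBelow E := ⟨0, fun x hx => (hx.1.1).le⟩
    set v₀ := sInf E with hv₀def
    have hv₀0 : 0 ≤ v₀ := le_csInf hEne (fun x hx => (hx.1.1).le)
    have hv₀L : v₀ ≤ d - c₁ := (csInf_le hEbdd ⟨hv₁I, hv₁lt⟩).trans hv₁I.2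
    have propI : ∀ v ∈ Set.Ioc (0:ℝ) (d - c₁), v < v₀ →
        FF g c₁ d v / (G d - G c₁) ^ 2 ≤ FF g c₂ d v / (G d - G c₂) ^ 2 := by
      intro v hv hvlt
      by_contra hlt
      push_neg at hlt
      exact absurd (csInf_le hEbdd ⟨hv, hlt⟩) (not_le.mpr hvlt)
    have propII : ∀ v ∈ Set.Ioc (0:ℝ) (d - c₁), v₀ < v →
        FF g c₂ d v / (G d - G c₂) ^ 2 ≤ FF g c₁ d v / (G d - G c₁) ^ 2 := by
      intro v hv hvgt
      obtain ⟨u, huE, huv⟩ := (csInf_lt_iff hEbdd hEne).mp hvgt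
      have hu0 : 0 < u := huE.1.1
      have hlemA := lemA hg_int hg_nonneg hlc hM₁ hM₂ hc hu0.le huv.le
      have hF₁u_pos : 0 < FF g c₁ d u / (G d - G c₁) ^ 2 :=
        lt_of_le_of_lt (div_nonneg (FF_nonneg hg_nonneg u) hQ₂.le) huE.2
      have h1 : (FF g c₂ d v / (G d - G c₂) ^ 2) * (FF g c₁ d u / (G d - G c₁) ^ 2)
          ≤ (FF g c₂ d u / (G d - G c₂) ^ 2) * (FF g c₁ d v / (G d - G c₁) ^ 2) := by
        rw [div_mul_div_comm, div_mul_div_comm]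
        exact (div_le_div_iff_of_pos_right (by positivity)).mpr hlemA
      have h2 : (FF g c₂ d u / (G d - G c₂) ^ 2) * (FF g c₁ d v / (G d - G c₁) ^ 2)
          ≤ (FF g c₁ d u / (G d - G c₁) ^ 2) * (FF g c₁ d v / (G d - G c₁) ^ 2) :=
        mul_le_mul_of_nonneg_right huE.2.le (div_nonneg (FF_nonneg hg_nonneg v) hQ₁.le)
      have h3 : (FF g c₂ d v / (G d - G c₂) ^ 2) * (FF g c₁ d u / (G d - G c₁) ^ 2)
          ≤ (FF g c₁ d v / (G d - G c₁) ^ 2) * (FF g c₁ d u / (G d - G c₁) ^ 2) := by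
        linarith [h1.trans h2]
      exact le_of_mul_le_mul_right h3 hF₁u_pos
    have hanti₁ : ∀ s t : ℝ, 0 ≤ s → s ≤ t →
        FF g c₁ d t / (G d - G c₁) ^ 2 ≤ FF g c₁ d s / (G d - G c₁) ^ 2 :=
      fun s t hs hst => (div_le_div_iff_of_pos_right hQ₁).mpr
        (FF_antitone hg_int hg_nonneg hlc hM₁ hs hst)
    have hanti₂ : ∀ s t : ℝ, 0 ≤ s → s ≤ t →
        FF g c₂ d t / (G d - G c₂) ^ 2 ≤ FF g c₂ d s / (G d - G c₂) ^ 2 :=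
      fun s t hs hst => (div_le_div_iff_of_pos_right hQ₂).mpr
        (FF_antitone hg_int hg_nonneg hlc hM₂ hs hst)
    have hnn₁ : ∀ v : ℝ, 0 ≤ FF g c₁ d v / (G d - G c₁) ^ 2 :=
      fun v => div_nonneg (FF_nonneg hg_nonneg v) hQ₁.le
    have hnn₂ : ∀ v : ℝ, 0 ≤ FF g c₂ d v / (G d - G c₂) ^ 2 :=
      fun v => div_nonneg (FF_nonneg hg_nonneg v) hQ₂.le
    have hpoint : ∀ v ∈ Set.Ioc (0:ℝ) (d - c₁),
        (w' v₀ * (FF g c₂ d v₀ / (G d - G c₂) ^ 2 + FF g c₁ d v₀ / (G d - G c₁) ^ 2))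
          * (FF g c₂ d v / (G d - G c₂) ^ 2 - FF g c₁ d v / (G d - G c₁) ^ 2)
        ≤ w' v * (FF g c₂ d v / (G d - G c₂) ^ 2) ^ 2
          - w' v * (FF g c₁ d v / (G d - G c₁) ^ 2) ^ 2 := by
      intro v hv
      have heq : w' v * (FF g c₂ d v / (G d - G c₂) ^ 2) ^ 2
          - w' v * (FF g c₁ d v / (G d - G c₁) ^ 2) ^ 2
          = (w' v * (FF g c₂ d v / (G d - G c₂) ^ 2 + FF g c₁ d v / (G d - G c₁) ^ 2))
            * (FF g c₂ d v / (G d - G c₂) ^ 2 - FF g c₁ d v / (G d - G c₁) ^ 2) := by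
        ring
      rw [heq]
      rcases lt_trichotomy v v₀ with hlt | heqv | hgt
      · have hδ : 0 ≤ FF g c₂ d v / (G d - G c₂) ^ 2 - FF g c₁ d v / (G d - G c₁) ^ 2 :=
          sub_nonneg.mpr (propI v hv hlt)
        have hφ : w' v₀ * (FF g c₂ d v₀ / (G d - G c₂) ^ 2 + FF g c₁ d v₀ / (G d - G c₁) ^ 2)
            ≤ w' v * (FF g c₂ d v / (G d - G c₂) ^ 2 + FF g c₁ d v / (G d - G c₁) ^ 2) := by
          apply mul_le_mul (hw'anti hlt.le)
            (add_le_add (hanti₂ v v₀ hv.1.le hlt.le) (hanti₁ v v₀ hv.1.le hlt.le))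
            (add_nonneg (hnn₂ v₀) (hnn₁ v₀)) (hw'0 v)
        exact mul_le_mul_of_nonneg_right hφ hδ
      · rw [heqv]
      · have hδ : FF g c₂ d v / (G d - G c₂) ^ 2 - FF g c₁ d v / (G d - G c₁) ^ 2 ≤ 0 :=
          sub_nonpos.mpr (propII v hv hgt)
        have hφ : w' v * (FF g c₂ d v / (G d - G c₂) ^ 2 + FF g c₁ d v / (G d - G c₁) ^ 2)
            ≤ w' v₀ * (FF g c₂ d v₀ / (G d - G c₂) ^ 2 + FF g c₁ d v₀ / (G d - G c₁) ^ 2) := by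
          apply mul_le_mul (hw'anti hgt.le)
            (add_le_add (hanti₂ v₀ v hv₀0 hgt.le) (hanti₁ v₀ v hv₀0 hgt.le))
            (add_nonneg (hnn₂ v) (hnn₁ v)) (hw'0 v₀)
        exact mul_le_mul_of_nonpos_right hφ hδ
    have hintL : IntegrableOn (fun v =>
        (w' v₀ * (FF g c₂ d v₀ / (G d - G c₂) ^ 2 + FF g c₁ d v₀ / (G d - G c₁) ^ 2))
          * (FF g c₂ d v / (G d - G c₂) ^ 2 - FF g c₁ d v / (G d - G c₁) ^ 2))
        (Set.Ioc (0:ℝ) (d - c₁)) volume :=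
      ((int_d₂.sub int_d₁).const_mul _)
    have hintR : IntegrableOn (fun v =>
        w' v * (FF g c₂ d v / (G d - G c₂) ^ 2) ^ 2
          - w' v * (FF g c₁ d v / (G d - G c₁) ^ 2) ^ 2)
        (Set.Ioc (0:ℝ) (d - c₁)) volume := int_w₂.sub int_w₁
    have hmono := setIntegral_mono_on hintL hintR measurableSet_Ioc hpoint
    have hLzero : (∫ v in Set.Ioc (0:ℝ) (d - c₁),
        (w' v₀ * (FF g c₂ d v₀ / (G d - G c₂) ^ 2 + FF g c₁ d v₀ / (G d - G c₁) ^ 2))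
          * (FF g c₂ d v / (G d - G c₂) ^ 2 - FF g c₁ d v / (G d - G c₁) ^ 2)) = 0 := by
      rw [integral_const_mul, integral_sub int_d₂ int_d₁, hmass₁, hmass₂]
      ring
    have hRsplit : (∫ v in Set.Ioc (0:ℝ) (d - c₁),
        (w' v * (FF g c₂ d v / (G d - G c₂) ^ 2) ^ 2
          - w' v * (FF g c₁ d v / (G d - G c₁) ^ 2) ^ 2))
        = (∫ v in Set.Ioc (0:ℝ) (d - c₁), w' v * (FF g c₂ d v / (G d - G c₂) ^ 2) ^ 2)
          - ∫ v in Set.Ioc (0:ℝ) (d - c₁), w' v * (FF g c₁ d v / (G d - G c₁) ^ 2) ^ 2 :=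
      integral_sub int_w₂ int_w₁
    rw [hLzero, hRsplit] at hmono
    linarith
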